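/- Let C be a diagonally X-neighbour transitive code in H(m,q) (m,q ≥ 2). Then one of the following holds: (i) C = {(a,…,a)} for some letter a; (ii) C = Rep(m,q); (iii) C = Inj(m,q) with m < q; (iv) C = W([m/2],2) with q = 2 and m ≥ 3 odd; or (v) m = pq for some positive integer p and C ⊆ All(pq,q). -/

import Mathlib

open Equiv Pointwise

section HammingDefs

variable {I : Type*} [Fintype I] [DecidableEq I] {q : ℕ}

/-- The permutation of the vertex set of the Hamming graph `H(I,q)` induced by the
letter permutations `g i` (acting coordinatewise) followed by the coordinate
permutation `σ`:  `(α^x)_i = g_{σ⁻¹ i} (α_{σ⁻¹ i})`. -/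
def tvp (g : I → Equiv.Perm (Fin q)) (σ : Equiv.Perm I) : Equiv.Perm (I → Fin q) where
  toFun α i := g (σ⁻¹ i) (α (σ⁻¹ i))
  invFun β i := (g i)⁻¹ (β (σ i))
  left_inv α := by funext i; simp
  right_inv β := by funext i; simp

/-- The automorphism group of the Hamming graph `H(I,q)`: all permutations of the
vertex set preserving adjacency (Hamming distance 1). -/
def autH (I : Type*) [Fintype I] [DecidableEq I] (q : ℕ) :
    Subgroup (Equiv.Perm (I → Fin q)) where
  carrier := {y | ∀ α β : I → Fin q, hammingDist (y α) (y β) = 1 ↔ hammingDist α β = 1}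
  one_mem' := by intro α β; simp
  mul_mem' := by
    intro a b ha hb α β
    rw [Equiv.Perm.mul_apply, Equiv.Perm.mul_apply, ha, hb]
  inv_mem' := by
    intro a ha α β
    simpa using (ha (a⁻¹ α) (a⁻¹ β)).symm

/-- The homomorphism `S_q × S_I → Sym(V(H(I,q)))` whose image is `Diag(S_q) ⋊ L`. -/
def diagLHom (I : Type*) [Fintype I] [DecidableEq I] (q : ℕ) :
    Equiv.Perm (Fin q) × Equiv.Perm I →* Equiv.Perm (I → Fin q) where
  toFun x := tvp (fun _ => x.1) x.2
  map_one' := by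
    ext α i
    simp [tvp]
  map_mul' x y := by
    ext α i
    simp [tvp, mul_inv_rev]

/-- The subgroup `Diag_I(S_q) ⋊ L` of the automorphism group of `H(I,q)`. -/
def diagL (I : Type*) [Fintype I] [DecidableEq I] (q : ℕ) :
    Subgroup (Equiv.Perm (I → Fin q)) :=
  (diagLHom I q).range

/-- The subgroup `L` of pure coordinate permutations of `H(I,q)`. -/
def permL (I : Type*) [Fintype I] [DecidableEq I] (q : ℕ) :
    Subgroup (Equiv.Perm (I → Fin q)) :=
  ((diagLHom I q).comp (MonoidHom.inr (Equiv.Perm (Fin q)) (Equiv.Perm I))).range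

/-- Distance from a vertex to a code. -/
noncomputable def distC (γ : I → Fin q) (C : Set (I → Fin q)) : ℕ :=
  sInf {d | ∃ β ∈ C, hammingDist γ β = d}

/-- The cell `C_i` of the distance partition of the code `C`. -/
def cell (C : Set (I → Fin q)) (i : ℕ) : Set (I → Fin q) :=
  {γ | distC γ C = i}

/-- The covering radius of the code `C`. -/
noncomputable def covRad (C : Set (I → Fin q)) : ℕ :=
  sSup {d | ∃ γ : I → Fin q, distC γ C = d}

/-- The minimum distance of the code `C`. -/
noncomputable def minDist (C : Set (I → Fin q)) : ℕ :=
  sInf {d | ∃ β ∈ C, ∃ γ ∈ C, β ≠ γ ∧ hammingDist β γ = d}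

/-- `S` is an orbit of the subgroup `X` of permutations of the vertex set. -/
def IsOrbitOf (X : Subgroup (Equiv.Perm (I → Fin q))) (S : Set (I → Fin q)) : Prop :=
  ∃ v, S = {w | ∃ x ∈ X, x v = w}

/-- `C` is `X`-neighbour transitive: `X` is a group of automorphisms of the Hamming
graph, and both `C` and its set of neighbours `C_1` are `X`-orbits. -/
def NbrTransitive (X : Subgroup (Equiv.Perm (I → Fin q))) (C : Set (I → Fin q)) : Prop :=
  X ≤ autH I q ∧ IsOrbitOf X C ∧ IsOrbitOf X (cell C 1)

/-- `C` is `X`-completely transitive: every cell of the distance partition is an `X`-orbit. -/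
def ComplTransitive (X : Subgroup (Equiv.Perm (I → Fin q))) (C : Set (I → Fin q)) : Prop :=
  X ≤ autH I q ∧ ∀ i ≤ covRad C, IsOrbitOf X (cell C i)

/-- `C` is diagonally `X`-neighbour transitive. -/
def DiagNbrTransitive (X : Subgroup (Equiv.Perm (I → Fin q))) (C : Set (I → Fin q)) : Prop :=
  NbrTransitive X C ∧ X ≤ diagL I q

/-- The automorphism group of the code `C`: the setwise stabiliser of `C` in the
automorphism group of the Hamming graph. -/
def autCode (C : Set (I → Fin q)) : Subgroup (Equiv.Perm (I → Fin q)) :=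
  autH I q ⊓ MulAction.stabilizer (Equiv.Perm (I → Fin q)) C

/-- Number of occurrences of the letter `a` in the vertex `α`. -/
def cnt (α : I → Fin q) (a : Fin q) : ℕ :=
  (Finset.univ.filter fun i => α i = a).card

/-- The composition `Q(α)` of a vertex: the set of pairs `(a, p)` such that the letter `a`
occurs exactly `p > 0` times in `α`. -/
def compOf (α : I → Fin q) : Set (Fin q × ℕ) :=
  {x | 0 < x.2 ∧ cnt α x.1 = x.2}

/-- `Num(α)`: the set of pairs `(p, s)` such that exactly `s > 0` distinct letters occur
exactly `p > 0` times in `α`. -/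
def numOf (α : I → Fin q) : Set (ℕ × ℕ) :=
  {x | 0 < x.1 ∧ 0 < x.2 ∧ (Finset.univ.filter fun a => cnt α a = x.1).card = x.2}

/-- The repetition code `Rep(I,q)`. -/
def repCode (I : Type*) [Fintype I] [DecidableEq I] (q : ℕ) : Set (I → Fin q) :=
  {α | ∃ a, α = fun _ => a}

/-- The injection code `Inj(I,q)`: all tuples with pairwise distinct entries. -/
def injCode (I : Type*) [Fintype I] [DecidableEq I] (q : ℕ) : Set (I → Fin q) :=
  {α | Function.Injective α}

/-- The code `All(pq,q)`: all vertices in which every letter occurs exactly `p` times. -/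
def allCode (I : Type*) [Fintype I] [DecidableEq I] (q p : ℕ) : Set (I → Fin q) :=
  {α | ∀ a, cnt α a = p}

/-- `C` is `s`-regular. -/
def RegularUpTo (C : Set (I → Fin q)) (s : ℕ) : Prop :=
  ∀ i ≤ s, ∀ γ ∈ cell C i, ∀ γ' ∈ cell C i, ∀ k : ℕ,
    {β ∈ C | hammingDist γ β = k}.ncard = {β ∈ C | hammingDist γ' β = k}.ncard

/-- `C` is completely regular. -/
def ComplRegular (C : Set (I → Fin q)) : Prop :=
  RegularUpTo C (covRad C)

/-- `C` is a constant composition code: every letter occurs the same positive number of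
times in every codeword. -/
def IsCCC (C : Set (I → Fin q)) : Prop :=
  C.Nonempty ∧ ∃ f : Fin q → ℕ, (∀ a, 0 < f a) ∧ ∀ β ∈ C, ∀ a, cnt β a = f a

end HammingDefs

section Weight

/-- The weight of a binary vertex: number of nonzero entries. -/
def wt {m : ℕ} (α : Fin m → Fin 2) : ℕ :=
  (Finset.univ.filter fun i => α i ≠ 0).card

/-- The code `W([m/2],2)`: binary `m`-tuples of weight `(m+1)/2` or `(m-1)/2`. -/
def wCode (m : ℕ) : Set (Fin m → Fin 2) :=
  {α | wt α = (m+1)/2 ∨ wt α = (m-1)/2}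

/-- The code `W([m/2],2)` over a general alphabet (used when `q = 2`): vertices in which
one letter occurs `(m+1)/2` times and another `(m-1)/2` times. -/
def wCodeGen (m q : ℕ) : Set (Fin m → Fin q) :=
  {α | ∃ a b : Fin q, a ≠ b ∧ cnt α a = (m+1)/2 ∧ cnt α b = (m-1)/2}

end Weight

section PermCodes

/-- The vertex `α(g) = (1^g, …, q^g)` of `H(q,q)` associated with a permutation `g`. -/
def alphaVtx {q : ℕ} (g : Equiv.Perm (Fin q)) : Fin q → Fin q := fun i => g i

/-- The permutation code generated by a set `T` of permutations. -/
def permCode {q : ℕ} (T : Set (Equiv.Perm (Fin q))) : Set (Fin q → Fin q) :=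
  alphaVtx '' T

end PermCodes

section Repetition

variable {I : Type*} [Fintype I] [DecidableEq I] {q : ℕ}

/-- The `p`-fold repetition `rep_p(α) = (α,…,α)`, a vertex of `H(p·|I|, q)`. -/
def repv (p : ℕ) (α : I → Fin q) : Fin p × I → Fin q := fun ji => α ji.2

/-- The `p`-fold repetition code `Rep_p(C)`. -/
def repCodeP (p : ℕ) (C : Set (I → Fin q)) : Set (Fin p × I → Fin q) :=
  repv p '' C

/-- The homomorphism `Sym(V(H(I,q))) × S_p → Sym(V(H(p·|I|,q)))`: the pair `(x,σ)` acts on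
`p`-tuples of vertices by `(α_1,…,α_p) ↦ (α_{σ⁻¹(1)}^x, …, α_{σ⁻¹(p)}^x)`. -/
def repHom (p : ℕ) (I : Type*) [Fintype I] [DecidableEq I] (q : ℕ) :
    Equiv.Perm (I → Fin q) × Equiv.Perm (Fin p) →* Equiv.Perm (Fin p × I → Fin q) where
  toFun x :=
    { toFun := fun β ji => x.1 (fun i => β (x.2⁻¹ ji.1, i)) ji.2
      invFun := fun β ji => x.1⁻¹ (fun i => β (x.2 ji.1, i)) ji.2
      left_inv := by intro β; funext ji; simp
      right_inv := by intro β; funext ji; simp }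
  map_one' := by ext β ji; simp
  map_mul' x y := by ext β ji; simp [mul_inv_rev]

end Repetition

section Aux
namespace DNT
open Finset Function

variable {m q : ℕ}

lemma cnt_pos_iff (γ : Fin m → Fin q) (a : Fin q) : 0 < cnt γ a ↔ ∃ j, γ j = a := by
  rw [cnt, Finset.card_pos]
  constructor
  · rintro ⟨j, hj⟩; exact ⟨j, (Finset.mem_filter.mp hj).2⟩
  · rintro ⟨j, hj⟩; exact ⟨j, Finset.mem_filter.mpr ⟨Finset.mem_univ _, hj⟩⟩

lemma sum_cnt (γ : Fin m → Fin q) : ∑ a, cnt γ a = m := by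
  have := Finset.card_eq_sum_card_fiberwise
    (f := γ) (s := Finset.univ) (t := Finset.univ) (fun i _ => Finset.mem_univ _)
  simpa [cnt] using this.symm

lemma cnt_update_self (β : Fin m → Fin q) (j : Fin m) (b : Fin q) (h : b ≠ β j) :
    cnt (Function.update β j b) (β j) + 1 = cnt β (β j) := by
  have hfil : (Finset.univ.filter fun i => Function.update β j b i = β j)
      = (Finset.univ.filter fun i => β i = β j).erase j := by
    ext i
    rcases eq_or_ne i j with rfl | hij
    · simp [Function.update_self, h]
    · simp [Function.update_of_ne hij, hij]
  have hj : j ∈ (Finset.univ.filter fun i => β i = β j) := by simp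
  rw [cnt, cnt, hfil, Finset.card_erase_of_mem hj]
  have : 0 < (Finset.univ.filter fun i => β i = β j).card := Finset.card_pos.mpr ⟨j, hj⟩
  omega

lemma cnt_update_target (β : Fin m → Fin q) (j : Fin m) (b : Fin q) (h : b ≠ β j) :
    cnt (Function.update β j b) b = cnt β b + 1 := by
  have hfil : (Finset.univ.filter fun i => Function.update β j b i = b)
      = insert j (Finset.univ.filter fun i => β i = b) := by
    ext i
    rcases eq_or_ne i j with rfl | hij
    · simp [Function.update_self]
    · simp [Function.update_of_ne hij, hij]
  have hj : j ∉ (Finset.univ.filter fun i => β i = b) := by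
    simp only [Finset.mem_filter, Finset.mem_univ, true_and]
    exact Ne.symm h
  rw [cnt, cnt, hfil, Finset.card_insert_of_notMem hj]

lemma cnt_update_other (β : Fin m → Fin q) (j : Fin m) (b c : Fin q)
    (h1 : c ≠ β j) (h2 : c ≠ b) :
    cnt (Function.update β j b) c = cnt β c := by
  unfold cnt
  congr 1
  ext i
  rcases eq_or_ne i j with rfl | hij
  · simp [Function.update_self, Ne.symm h2, Ne.symm h1]
  · simp [Function.update_of_ne hij]

/-- Number of letters occurring exactly `k` times. -/
def Ncf (γ : Fin m → Fin q) (k : ℕ) : ℕ := (Finset.univ.filter fun a => cnt γ a = k).card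

lemma Ncf_update (β : Fin m → Fin q) (j : Fin m) (b : Fin q) (h : b ≠ β j) (k : ℕ) :
    Ncf (Function.update β j b) k + (if cnt β (β j) = k then 1 else 0)
      + (if cnt β b = k then 1 else 0)
    = Ncf β k + (if cnt β (β j) - 1 = k then 1 else 0)
      + (if cnt β b + 1 = k then 1 else 0) := by
  classical
  set ν := Function.update β j b with hν
  have hab : (β j) ≠ b := Ne.symm h
  have hsub : ({β j, b} : Finset (Fin q)) ⊆ Finset.univ := Finset.subset_univ _
  have hsplit : ∀ F : Fin q → ℕ,
      ∑ c, F c = ∑ c ∈ Finset.univ \ {β j, b}, F c + (F (β j) + F b) := by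
    intro F
    rw [← Finset.sum_pair hab, Finset.sum_sdiff hsub]
  have hcard : ∀ γ' : Fin m → Fin q, ∀ k' : ℕ,
      Ncf γ' k' = ∑ c, (if cnt γ' c = k' then 1 else 0) := by
    intro γ' k'; rw [Ncf, Finset.card_filter]
  have htail : ∑ c ∈ Finset.univ \ {β j, b}, (if cnt ν c = k then 1 else 0)
      = ∑ c ∈ Finset.univ \ {β j, b}, (if cnt β c = k then 1 else 0) := by
    apply Finset.sum_congr rfl
    intro c hc
    have hc' := Finset.mem_sdiff.mp hc
    have h1 : c ≠ β j := by intro hh; exact hc'.2 (by simp [hh])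
    have h2 : c ≠ b := by intro hh; exact hc'.2 (by simp [hh])
    rw [cnt_update_other β j b c h1 h2]
  have hs : cnt ν (β j) + 1 = cnt β (β j) := cnt_update_self β j b h
  have ht : cnt ν b = cnt β b + 1 := cnt_update_target β j b h
  have hνa : cnt ν (β j) = cnt β (β j) - 1 := by omega
  rw [hcard ν k, hcard β k, hsplit, hsplit, htail, hνa, ht]
  omega

lemma card_filter_comp_perm {ι : Type*} [Fintype ι] [DecidableEq ι] (τ : Equiv.Perm ι)
    (P : ι → Prop) [DecidablePred P] :
    (Finset.univ.filter fun i => P (τ i)).card = (Finset.univ.filter P).card := by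
  apply Finset.card_bij (fun i _ => τ i)
  · intro i hi; simpa using (Finset.mem_filter.mp hi).2
  · intro i hi i' hi' hh; exact τ.injective hh
  · intro j hj
    refine ⟨τ⁻¹ j, ?_, by simp⟩
    simp only [Finset.mem_filter, Finset.mem_univ, true_and]
    simpa using (Finset.mem_filter.mp hj).2

lemma tvp_apply (g : Fin m → Equiv.Perm (Fin q)) (σ : Equiv.Perm (Fin m))
    (α : Fin m → Fin q) (i : Fin m) :
    tvp g σ α i = g (σ⁻¹ i) (α (σ⁻¹ i)) := rfl

lemma cnt_tvp (g : Equiv.Perm (Fin q)) (σ : Equiv.Perm (Fin m)) (α : Fin m → Fin q)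
    (a : Fin q) : cnt (tvp (fun _ => g) σ α) (g a) = cnt α a := by
  unfold cnt
  have : (Finset.univ.filter fun i => tvp (fun _ => g) σ α i = g a)
      = Finset.univ.filter fun i => α (σ⁻¹ i) = a := by
    apply Finset.filter_congr
    intro i _
    rw [tvp_apply]
    exact ⟨fun hh => g.injective hh, fun hh => by rw [hh]⟩
  rw [this]
  exact card_filter_comp_perm σ⁻¹ (fun i => α i = a)

lemma Ncf_tvp (g : Equiv.Perm (Fin q)) (σ : Equiv.Perm (Fin m)) (α : Fin m → Fin q) :
    Ncf (tvp (fun _ => g) σ α) = Ncf α := by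
  funext k
  unfold Ncf
  have : (Finset.univ.filter fun a => cnt (tvp (fun _ => g) σ α) a = k)
      = Finset.univ.filter fun a => cnt α (g⁻¹ a) = k := by
    apply Finset.filter_congr
    intro a _
    have := cnt_tvp g σ α (g⁻¹ a)
    simp only [Equiv.Perm.inv_def, Equiv.apply_symm_apply] at this
    rw [this]; rfl
  rw [this]
  exact card_filter_comp_perm g⁻¹ (fun a => cnt α a = k)

lemma hd_update_add (γ δ : Fin m → Fin q) (j : Fin m) (b : Fin q) :
    hammingDist (Function.update γ j b) δ + (if γ j ≠ δ j then 1 else 0)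
    = hammingDist γ δ + (if b ≠ δ j then 1 else 0) := by
  classical
  have hcard : ∀ γ' : Fin m → Fin q,
      hammingDist γ' δ = ∑ i, (if γ' i ≠ δ i then 1 else 0) := by
    intro γ'; rw [hammingDist, Finset.card_filter]
  have hsub : ({j} : Finset (Fin m)) ⊆ Finset.univ := Finset.subset_univ _
  have hsplit : ∀ F : Fin m → ℕ,
      ∑ i, F i = ∑ i ∈ Finset.univ \ {j}, F i + F j := by
    intro F
    rw [← Finset.sum_singleton F j, Finset.sum_sdiff hsub]
  have htail : ∑ i ∈ Finset.univ \ {j}, (if Function.update γ j b i ≠ δ i then 1 else 0)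
      = ∑ i ∈ Finset.univ \ {j}, (if γ i ≠ δ i then 1 else 0) := by
    apply Finset.sum_congr rfl
    intro i hi
    have hij : i ≠ j := by
      have := (Finset.mem_sdiff.mp hi).2; simpa using this
    rw [Function.update_of_ne hij]
  rw [hcard, hcard, hsplit, hsplit, htail, Function.update_self]
  omega

lemma hd_update_one (γ : Fin m → Fin q) (j : Fin m) (b : Fin q) (h : b ≠ γ j) :
    hammingDist (Function.update γ j b) γ = 1 := by
  have := hd_update_add γ γ j b
  simp only [ne_eq, not_true_eq_false, if_neg, hammingDist_self] at this
  simpa [h] using this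


variable {C : Set (Fin m → Fin q)}

lemma mem_of_dist_one {β γ : Fin m → Fin q} (hβ : β ∈ C) (hd : hammingDist γ β = 1) :
    γ ∈ C ∨ γ ∈ cell C 1 := by
  have hle : distC γ C ≤ 1 := by
    rw [← hd]; exact Nat.sInf_le ⟨β, hβ, rfl⟩
  have hne : {d | ∃ β' ∈ C, hammingDist γ β' = d}.Nonempty := ⟨1, β, hβ, hd⟩
  have hmem := Nat.sInf_mem hne
  interval_cases h : distC γ C
  · left
    rw [distC] at h
    rw [h] at hmem
    obtain ⟨β', hβ', hd0⟩ := hmem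
    rwa [hammingDist_eq_zero.mp hd0]
  · right
    exact h

lemma cellone_exists {ν : Fin m → Fin q} (hν : ν ∈ cell C 1) :
    ∃ β ∈ C, hammingDist ν β = 1 := by
  have h1 : distC ν C = 1 := hν
  rcases Set.eq_empty_or_nonempty {d | ∃ β' ∈ C, hammingDist ν β' = d} with he | hne
  · rw [distC, he] at h1; simp at h1
  · have := Nat.sInf_mem hne
    rw [← distC, h1] at this
    exact this

lemma cnt_le_one_of_inj {γ : Fin m → Fin q} (hγ : Function.Injective γ) (a : Fin q) :
    cnt γ a ≤ 1 := by
  by_contra hc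
  push_neg at hc
  obtain ⟨i, hi, j, hj, hij⟩ := Finset.one_lt_card.mp hc
  exact hij (hγ ((Finset.mem_filter.mp hi).2.trans (Finset.mem_filter.mp hj).2.symm))

lemma injective_of_cnt_le_one {γ : Fin m → Fin q} (h : ∀ a, cnt γ a ≤ 1) :
    Function.Injective γ := by
  intro i j hij
  by_contra hne
  have hsub : ({i, j} : Finset (Fin m)) ⊆ Finset.univ.filter fun x => γ x = γ i := by
    intro x hx
    rcases Finset.mem_insert.mp hx with rfl | hx
    · simp
    · rw [Finset.mem_singleton.mp hx]; simp [hij.symm]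
  have h2 : 2 ≤ cnt γ (γ i) := by
    have := Finset.card_le_card hsub
    rwa [Finset.card_pair hne] at this
  have := h (γ i)
  omega

lemma inj_update {γ : Fin m → Fin q} (hγ : Function.Injective γ) (j : Fin m) (b : Fin q)
    (hb : ∀ i, γ i ≠ b) : Function.Injective (Function.update γ j b) := by
  intro x y hxy
  rcases eq_or_ne x j with hx | hx
  · rcases eq_or_ne y j with hy | hy
    · rw [hx, hy]
    · rw [hx, Function.update_self, Function.update_of_ne hy] at hxy
      exact absurd hxy.symm (hb y)
  · rcases eq_or_ne y j with hy | hy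
    · rw [hy, Function.update_self, Function.update_of_ne hx] at hxy
      exact absurd hxy (hb x)
    · rw [Function.update_of_ne hx, Function.update_of_ne hy] at hxy
      exact hγ hxy

lemma diag_member {x : Equiv.Perm (Fin m → Fin q)} (hx : x ∈ diagL (Fin m) q) :
    ∃ g : Equiv.Perm (Fin q), ∃ σ : Equiv.Perm (Fin m), ∀ α, x α = tvp (fun _ => g) σ α := by
  obtain ⟨p, hp⟩ := hx
  exact ⟨p.1, p.2, fun α => by rw [← hp]; rfl⟩

lemma Ncf_diag_mem {x : Equiv.Perm (Fin m → Fin q)} (hx : x ∈ diagL (Fin m) q)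
    (α : Fin m → Fin q) : Ncf (x α) = Ncf α := by
  obtain ⟨g, σ, hgσ⟩ := diag_member hx
  rw [hgσ α, Ncf_tvp]

lemma orbit_self {X : Subgroup (Equiv.Perm (Fin m → Fin q))} {v : Fin m → Fin q}
    (hC : C = {w | ∃ x ∈ X, x v = w}) : v ∈ C := by
  rw [hC]; exact ⟨1, X.one_mem, rfl⟩

lemma orbit_step {X : Subgroup (Equiv.Perm (Fin m → Fin q))} {v u : Fin m → Fin q}
    {x : Equiv.Perm (Fin m → Fin q)} (hC : C = {w | ∃ x ∈ X, x v = w})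
    (hx : x ∈ X) (hu : u ∈ C) : x u ∈ C := by
  rw [hC] at hu ⊢
  obtain ⟨y, hy, hyv⟩ := hu
  exact ⟨x * y, X.mul_mem hx hy, by rw [Equiv.Perm.mul_apply, hyv]⟩

lemma orbit_trans {X : Subgroup (Equiv.Perm (Fin m → Fin q))} {v u u' : Fin m → Fin q}
    (hC : C = {w | ∃ x ∈ X, x v = w}) (hu : u ∈ C) (hu' : u' ∈ C) :
    ∃ x ∈ X, x u = u' := by
  rw [hC] at hu hu'
  obtain ⟨y, hy, hyv⟩ := hu
  obtain ⟨z, hz, hzv⟩ := hu'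
  refine ⟨z * y⁻¹, X.mul_mem hz (X.inv_mem hy), ?_⟩
  rw [Equiv.Perm.mul_apply, ← hyv, Equiv.Perm.inv_def, Equiv.symm_apply_apply, hzv]

lemma Ncf_orbit {X : Subgroup (Equiv.Perm (Fin m → Fin q))} {v β : Fin m → Fin q}
    (hXd : X ≤ diagL (Fin m) q) (hC : C = {w | ∃ x ∈ X, x v = w}) (hβ : β ∈ C) :
    Ncf β = Ncf v := by
  rw [hC] at hβ
  obtain ⟨x, hx, hxv⟩ := hβ
  rw [← hxv, Ncf_diag_mem (hXd hx)]


lemma inj_reach (hmq : m < q) {v : Fin m → Fin q} (hvC : v ∈ C)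
    (hvInj : Function.Injective v)
    (hclosed : ∀ β ∈ C, ∀ γ : Fin m → Fin q, Function.Injective γ →
      hammingDist γ β = 1 → γ ∈ C) :
    ∀ n : ℕ, ∀ γ : Fin m → Fin q, Function.Injective γ → hammingDist γ v ≤ n → γ ∈ C := by
  intro n
  induction n with
  | zero =>
    intro γ _ hd
    have : γ = v := hammingDist_eq_zero.mp (Nat.le_zero.mp hd)
    rwa [this]
  | succ n ih =>
    intro γ hγ hd
    by_cases h0 : hammingDist γ v = 0
    · have : γ = v := hammingDist_eq_zero.mp h0
      rwa [this]
    have hmis : ∃ i, γ i ≠ v i := by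
      by_contra h
      push_neg at h
      exact h0 (hammingDist_eq_zero.mpr (funext h))
    by_cases hcase : ∃ i, γ i ≠ v i ∧ ∀ i', γ i' ≠ v i
    · obtain ⟨i, hi, hfresh⟩ := hcase
      have hγ1 : Function.Injective (Function.update γ i (v i)) :=
        inj_update hγ i (v i) hfresh
      have hd1 : hammingDist (Function.update γ i (v i)) v + 1 = hammingDist γ v := by
        simpa [hi] using hd_update_add γ v i (v i)
      have hC1 : Function.update γ i (v i) ∈ C := ih _ hγ1 (by omega)
      have hadj : hammingDist γ (Function.update γ i (v i)) = 1 := by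
        rw [hammingDist_comm]
        exact hd_update_one γ i (v i) (Ne.symm hi)
      exact hclosed _ hC1 γ hγ hadj
    · push_neg at hcase
      obtain ⟨i, hi⟩ := hmis
      obtain ⟨i', hi'⟩ := hcase i hi
      have hii' : i' ≠ i := fun h => hi (h ▸ hi')
      have hnsurj : ¬ Function.Surjective γ := by
        intro hs
        have := Fintype.card_le_of_surjective γ hs
        simp only [Fintype.card_fin] at this
        omega
      rw [Function.Surjective] at hnsurj
      push_neg at hnsurj
      obtain ⟨e, he⟩ := hnsurj
      have hmis' : γ i' ≠ v i' := by
        rw [hi']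
        intro h
        exact hii' ((hvInj h).symm)
      obtain ⟨i₂, h₂⟩ := hcase i' hmis'
      have hev : e ≠ v i' := by
        intro h
        exact he i₂ (h₂.trans h.symm)
      have hγ2 : Function.Injective (Function.update γ i' e) :=
        inj_update hγ i' e (fun i₃ h => he i₃ h)
      set γ₂ := Function.update γ i' e with hγ₂def
      have hd2 : hammingDist γ₂ v = hammingDist γ v := by
        have h9 := hd_update_add γ v i' e
        rw [← hγ₂def] at h9
        simp only [if_pos hmis', if_pos hev] at h9
        omega
      have hγ₂i : γ₂ i = γ i := Function.update_of_ne (Ne.symm hii') _ _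
      have hfresh3 : ∀ i₃, γ₂ i₃ ≠ v i := by
        intro i₃
        rcases eq_or_ne i₃ i' with h3 | h3
        · rw [hγ₂def, h3, Function.update_self]
          intro h
          exact he i' (hi'.trans h.symm)
        · rw [hγ₂def, Function.update_of_ne h3]
          intro h
          exact h3 (hγ (h.trans hi'.symm))
      have hγ3 : Function.Injective (Function.update γ₂ i (v i)) :=
        inj_update hγ2 i (v i) hfresh3
      have hne2 : γ₂ i ≠ v i := by rw [hγ₂i]; exact hi
      have hd3 : hammingDist (Function.update γ₂ i (v i)) v + 1 = hammingDist γ₂ v := by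
        simpa [hne2] using hd_update_add γ₂ v i (v i)
      have h3C : Function.update γ₂ i (v i) ∈ C := ih _ hγ3 (by omega)
      have h2C : γ₂ ∈ C := by
        apply hclosed _ h3C γ₂ hγ2
        rw [hammingDist_comm]
        exact hd_update_one γ₂ i (v i) (Ne.symm hne2)
      apply hclosed γ₂ h2C γ hγ
      rw [hammingDist_comm]
      exact hd_update_one γ i' e (fun h => he i' h.symm)

lemma w_reach {A B : Fin q} {c : ℕ} (hAB : A ≠ B) (hall : ∀ x : Fin q, x = A ∨ x = B)
    {v : Fin m → Fin q} (hvC : v ∈ C) (hvA : cnt v A = c + 1)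
    (hclosed : ∀ β ∈ C, ∀ γ : Fin m → Fin q, (cnt γ A = c ∨ cnt γ A = c + 1) →
      hammingDist γ β = 1 → γ ∈ C) :
    ∀ n : ℕ, ∀ γ : Fin m → Fin q, (cnt γ A = c ∨ cnt γ A = c + 1) →
      hammingDist γ v ≤ n → γ ∈ C := by
  intro n
  induction n with
  | zero =>
    intro γ _ hd
    have : γ = v := hammingDist_eq_zero.mp (Nat.le_zero.mp hd)
    rwa [this]
  | succ n ih =>
    intro γ hinv hd
    by_cases h0 : hammingDist γ v = 0
    · have : γ = v := hammingDist_eq_zero.mp h0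
      rwa [this]
    classical
    set EA := (Finset.univ.filter fun i => γ i = A ∧ v i = A).card with hEA
    set X1 := (Finset.univ.filter fun i => γ i = A ∧ ¬ v i = A).card with hX1
    set X2 := (Finset.univ.filter fun i => v i = A ∧ ¬ γ i = A).card with hX2
    have hsplit1 : EA + X1 = cnt γ A := by
      rw [hEA, hX1, cnt]
      rw [show (Finset.univ.filter fun i => γ i = A ∧ v i = A)
          = (Finset.univ.filter fun i => γ i = A).filter (fun i => v i = A) by
        rw [Finset.filter_filter]]
      rw [show (Finset.univ.filter fun i => γ i = A ∧ ¬ v i = A)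
          = (Finset.univ.filter fun i => γ i = A).filter (fun i => ¬ v i = A) by
        rw [Finset.filter_filter]]
      exact Finset.card_filter_add_card_filter_not (fun i => v i = A)
    have hsplit2 : EA + X2 = cnt v A := by
      rw [hEA, hX2, cnt]
      rw [show (Finset.univ.filter fun i => γ i = A ∧ v i = A)
          = (Finset.univ.filter fun i => v i = A).filter (fun i => γ i = A) by
        rw [Finset.filter_filter]
        apply Finset.filter_congr
        intro i _
        simp [and_comm]]
      rw [show (Finset.univ.filter fun i => v i = A ∧ ¬ γ i = A)
          = (Finset.univ.filter fun i => v i = A).filter (fun i => ¬ γ i = A) by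
        rw [Finset.filter_filter]]
      exact Finset.card_filter_add_card_filter_not (fun i => γ i = A)
    have hmisEmpty : X1 = 0 → X2 = 0 → False := by
      intro h1 h2
      apply h0
      rw [hammingDist_eq_zero]
      funext i
      by_contra hne
      rcases hall (γ i) with hgA | hgB
      · have hmem : i ∈ Finset.univ.filter fun i => γ i = A ∧ ¬ v i = A := by
          simp only [Finset.mem_filter, Finset.mem_univ, true_and]
          exact ⟨hgA, fun h => hne (hgA.trans h.symm)⟩
        rw [hX1, Finset.card_eq_zero] at h1
        rw [h1] at hmem
        exact absurd hmem (Finset.notMem_empty i)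
      · have hvA' : v i = A := by
          rcases hall (v i) with h | h
          · exact h
          · exact absurd (hgB.trans h.symm) hne
        have hmem : i ∈ Finset.univ.filter fun i => v i = A ∧ ¬ γ i = A := by
          simp only [Finset.mem_filter, Finset.mem_univ, true_and]
          exact ⟨hvA', fun h => hne (h.trans hvA'.symm)⟩
        rw [hX2, Finset.card_eq_zero] at h2
        rw [h2] at hmem
        exact absurd hmem (Finset.notMem_empty i)
    rcases hinv with hc | hc1
    · have hX2pos : 0 < X2 := by omega
      obtain ⟨i, hi⟩ := Finset.card_pos.mp hX2pos
      obtain ⟨hviA, hgiA⟩ := (Finset.mem_filter.mp hi).2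
      have hne : v i ≠ γ i := fun h => hgiA (h ▸ hviA)
      have hcnt' : cnt (Function.update γ i (v i)) A = c + 1 := by
        rw [hviA]
        rw [cnt_update_target γ i A (fun h => hgiA h.symm)]
        omega
      have hdd : hammingDist (Function.update γ i (v i)) v + 1 = hammingDist γ v := by
        simpa [Ne.symm hne] using hd_update_add γ v i (v i)
      have hC' : Function.update γ i (v i) ∈ C := ih _ (Or.inr hcnt') (by omega)
      apply hclosed _ hC' γ (Or.inl hc)
      rw [hammingDist_comm]
      exact hd_update_one γ i (v i) hne
    · have hX1pos : 0 < X1 := by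
        rcases Nat.eq_zero_or_pos X1 with h1 | h1
        · exact absurd (hmisEmpty h1 (by omega)) not_false
        · exact h1
      obtain ⟨i, hi⟩ := Finset.card_pos.mp hX1pos
      obtain ⟨hgiA, hviA⟩ := (Finset.mem_filter.mp hi).2
      have hne : γ i ≠ v i := fun h => hviA (h ▸ hgiA)
      have hcnt' : cnt (Function.update γ i (v i)) A = c := by
        have h1 := cnt_update_self γ i (v i) (Ne.symm hne)
        rw [hgiA] at h1
        omega
      have hdd : hammingDist (Function.update γ i (v i)) v + 1 = hammingDist γ v := by
        simpa [hne] using hd_update_add γ v i (v i)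
      have hC' : Function.update γ i (v i) ∈ C := ih _ (Or.inl hcnt') (by omega)
      apply hclosed _ hC' γ (Or.inr hc1)
      rw [hammingDist_comm]
      exact hd_update_one γ i (v i) (Ne.symm hne)

lemma cnt_const (d e : Fin q) (hm : 0 < m) :
    cnt (fun _ : Fin m => d) e = if e = d then m else 0 := by
  unfold cnt
  by_cases h : e = d
  · subst h
    rw [if_pos rfl]
    simp
  · rw [if_neg h, Finset.card_eq_zero, Finset.filter_eq_empty_iff]
    intro i _
    exact fun hh => h hh.symm

lemma cnt_le_one_of_Ncf {β : Fin m → Fin q} (h : Ncf β 1 = m) (a : Fin q) :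
    cnt β a ≤ 1 := by
  by_contra hc
  push_neg at hc
  have ha : a ∉ Finset.univ.filter fun x => cnt β x = 1 := by
    simp only [Finset.mem_filter, Finset.mem_univ, true_and]
    omega
  have h1 : ∑ x ∈ insert a (Finset.univ.filter fun x => cnt β x = 1), cnt β x
      ≤ ∑ x, cnt β x :=
    Finset.sum_le_sum_of_subset (Finset.subset_univ _)
  rw [Finset.sum_insert ha] at h1
  have h2 : ∑ x ∈ (Finset.univ.filter fun x => cnt β x = 1), cnt β x
      = Ncf β 1 := by
    rw [Finset.sum_congr rfl (fun x hx => (Finset.mem_filter.mp hx).2), Ncf]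
    simp
  rw [h2, h, sum_cnt] at h1
  omega

end DNT
end Aux

/-- Theorem 4.3: classification of diagonally `X`-neighbour
transitive codes in `H(m,q)`. -/
theorem diag_neighbour_transitive_classification {m q : ℕ} (hm : 2 ≤ m) (hq : 2 ≤ q)
    (C : Set (Fin m → Fin q)) (X : Subgroup (Equiv.Perm (Fin m → Fin q)))
    (hX : DiagNbrTransitive X C) :
    (∃ a : Fin q, C = {fun _ => a}) ∨
    C = repCode (Fin m) q ∨
    (m < q ∧ C = injCode (Fin m) q) ∨
    (q = 2 ∧ 3 ≤ m ∧ Odd m ∧ C = wCodeGen m q) ∨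
    (∃ p : ℕ, 0 < p ∧ m = p * q ∧ C ⊆ allCode (Fin m) q p) := by
  classical
  obtain ⟨⟨hXaut, ⟨v, hCv⟩, ⟨w, hC1w⟩⟩, hXd⟩ := hX
  have hvC : v ∈ C := DNT.orbit_self hCv
  have hwC1 : w ∈ cell C 1 := DNT.orbit_self hC1w
  have hNC : ∀ β ∈ C, DNT.Ncf β = DNT.Ncf v := fun β hβ => DNT.Ncf_orbit hXd hCv hβ
  have hN1 : ∀ ν ∈ cell C 1, DNT.Ncf ν = DNT.Ncf w := fun ν hν => DNT.Ncf_orbit hXd hC1w hν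
  have hop : ∀ β ∈ C, ∀ (j : Fin m) (b : Fin q), b ≠ β j →
      DNT.Ncf (Function.update β j b) = DNT.Ncf v ∨
      DNT.Ncf (Function.update β j b) = DNT.Ncf w := by
    intro β hβ j b hb
    rcases DNT.mem_of_dist_one hβ (DNT.hd_update_one β j b hb) with h | h
    · exact Or.inl (hNC _ h)
    · exact Or.inr (hN1 _ h)
  have hm0 : 0 < m := by omega
  by_cases hconst : ∃ a : Fin q, ∀ i, v i = a
  · -- Case A : v is constant
    obtain ⟨a, ha⟩ := hconst
    have hva : v = fun _ => a := funext ha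
    have hcnt0 : ∀ x, x ≠ a → cnt v x = 0 := by
      intro x hx
      rw [hva, DNT.cnt_const a x hm0, if_neg hx]
    have hcntva : cnt v a = m := by
      rw [hva, DNT.cnt_const a a hm0, if_pos rfl]
    have hNvm : DNT.Ncf v m = 1 := by
      rw [DNT.Ncf]
      rw [show (Finset.univ.filter fun x => cnt v x = m) = {a} by
        ext x
        simp only [Finset.mem_filter, Finset.mem_univ, true_and, Finset.mem_singleton]
        constructor
        · intro h
          by_contra hx
          rw [hcnt0 x hx] at h
          omega
        · intro h; rw [h]; exact hcntva]
      exact Finset.card_singleton a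
    have hallconst : ∀ β ∈ C, ∃ aβ, ∀ i, β i = aβ := by
      intro β hβ
      have h1 : DNT.Ncf β m = 1 := by rw [hNC β hβ]; exact hNvm
      rw [DNT.Ncf, Finset.card_eq_one] at h1
      obtain ⟨aβ, haβ⟩ := h1
      have haβm : cnt β aβ = m := by
        have : aβ ∈ Finset.univ.filter fun x => cnt β x = m := by
          rw [haβ]; exact Finset.mem_singleton_self aβ
        exact (Finset.mem_filter.mp this).2
      have huniv : (Finset.univ.filter fun i => β i = aβ) = Finset.univ := by
        apply Finset.eq_univ_of_card
        rw [← cnt, haβm, Fintype.card_fin]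
      refine ⟨aβ, fun i => ?_⟩
      have : i ∈ Finset.univ.filter fun i => β i = aβ := by rw [huniv]; exact Finset.mem_univ i
      exact (Finset.mem_filter.mp this).2
    by_cases hsec : ∃ b, b ≠ a ∧ (fun _ : Fin m => b) ∈ C
    · right; left
      obtain ⟨b, hba, hbC⟩ := hsec
      have haC : (fun _ : Fin m => a) ∈ C := hva ▸ hvC
      have key : ∀ c : Fin q, (fun _ : Fin m => c) ∈ C := by
        intro c
        by_cases hca : c = a
        · rw [hca]; exact haC
        by_cases hcb : c = b
        · rw [hcb]; exact hbC
        set i0 : Fin m := ⟨0, hm0⟩ with hi0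
        set j1 : Fin m := ⟨1, by omega⟩ with hj1
        have hj1i0 : j1 ≠ i0 := by
          rw [hi0, hj1]
          simp [Fin.ext_iff]
        have hnc : ∀ d : Fin q, d ≠ a → Function.update (fun _ : Fin m => a) i0 d ∈ cell C 1 := by
          intro d hd
          have hmem := DNT.mem_of_dist_one haC
            (DNT.hd_update_one (fun _ : Fin m => a) i0 d hd)
          rcases hmem with h | h
          · exfalso
            obtain ⟨e, he⟩ := hallconst _ h
            have h1 : d = e := by
              have := he i0
              rwa [Function.update_self] at this
            have h2 : a = e := by
              have := he j1
              rwa [Function.update_of_ne hj1i0] at this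
            exact hd (h1.trans h2.symm)
          · exact h
        have hν1 : Function.update (fun _ : Fin m => a) i0 b ∈ cell C 1 := hnc b hba
        have hμ1 : Function.update (fun _ : Fin m => a) i0 c ∈ cell C 1 := hnc c hca
        set ν := Function.update (fun _ : Fin m => a) i0 b with hν
        set μ := Function.update (fun _ : Fin m => a) i0 c with hμ
        obtain ⟨x, hxX, hxνμ⟩ := DNT.orbit_trans hC1w hν1 hμ1
        obtain ⟨g, σ, hgσ⟩ := DNT.diag_member (hXd hxX)
        have hcnt_rel : ∀ e, cnt μ (g e) = cnt ν e := by
          intro e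
          rw [← hxνμ, hgσ ν]
          exact DNT.cnt_tvp g σ ν e
        have hcν_b : cnt ν b = 1 := by
          rw [hν, DNT.cnt_update_target (fun _ : Fin m => a) i0 b hba,
            DNT.cnt_const a b hm0, if_neg hba]
        have hcν_a : cnt ν a + 1 = m := by
          have := DNT.cnt_update_self (fun _ : Fin m => a) i0 b hba
          rwa [DNT.cnt_const a a hm0, if_pos rfl] at this
        have hcμ_a : cnt μ a + 1 = m := by
          have := DNT.cnt_update_self (fun _ : Fin m => a) i0 c hca
          rwa [DNT.cnt_const a a hm0, if_pos rfl] at this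
        have hcμ_other : ∀ e, e ≠ a → e ≠ c → cnt μ e = 0 := by
          intro e he1 he2
          rw [hμ, DNT.cnt_update_other (fun _ : Fin m => a) i0 c e he1 he2,
            DNT.cnt_const a e hm0, if_neg he1]
        have hgb1 : cnt μ (g b) = 1 := by rw [hcnt_rel b, hcν_b]
        have hconst_img : ∀ d : Fin q, x (fun _ : Fin m => d) = (fun _ : Fin m => g d) := by
          intro d
          rw [hgσ]
          funext i
          rfl
        by_cases hgbc : g b = c
        · have hxb := DNT.orbit_step hCv hxX hbC
          rw [hconst_img b, hgbc] at hxb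
          exact hxb
        · by_cases hgba : g b = a
          · have hm2 : m = 2 := by
              rw [hgba] at hgb1
              omega
            have hga1 : cnt μ (g a) = 1 := by
              rw [hcnt_rel a]
              omega
            have hgaa : g a ≠ a := by
              intro h
              exact hba (g.injective (hgba.trans h.symm))
            have hgac : g a = c := by
              by_contra hne
              rw [hcμ_other (g a) hgaa hne] at hga1
              omega
            have hxa := DNT.orbit_step hCv hxX haC
            rw [hconst_img a, hgac] at hxa
            exact hxa
          · exfalso
            rw [hcμ_other (g b) hgba hgbc] at hgb1
            omega
      ext γ
      constructor
      · intro hγ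
        obtain ⟨aγ, haγ⟩ := hallconst γ hγ
        exact ⟨aγ, funext haγ⟩
      · rintro ⟨cγ, rfl⟩
        exact key cγ
    · left
      push_neg at hsec
      refine ⟨a, ?_⟩
      ext γ
      simp only [Set.mem_singleton_iff]
      constructor
      · intro hγ
        obtain ⟨aγ, haγ⟩ := hallconst γ hγ
        have hγeq : γ = fun _ => aγ := funext haγ
        by_cases haa : aγ = a
        · rw [hγeq, haa]
        · exfalso
          exact hsec aγ haa (hγeq ▸ hγ)
      · intro h
        rw [h, ← hva]
        exact hvC
  · -- Case B : v is not constant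
    push_neg at hconst
    set i0 : Fin m := ⟨0, hm0⟩ with hi0def
    obtain ⟨i1, hi1⟩ := hconst (v i0)
    have hpos1 : 0 < cnt v (v i0) := (DNT.cnt_pos_iff v (v i0)).mpr ⟨i0, rfl⟩
    have hpos2 : 0 < cnt v (v i1) := (DNT.cnt_pos_iff v (v i1)).mpr ⟨i1, rfl⟩
    obtain ⟨amax, -, hmax'⟩ := Finset.exists_max_image Finset.univ (cnt v)
      ⟨v i0, Finset.mem_univ _⟩
    have hmax : ∀ x, cnt v x ≤ cnt v amax := fun x => hmax' x (Finset.mem_univ x)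
    have hposmax : 0 < cnt v amax := lt_of_lt_of_le hpos1 (hmax _)
    obtain ⟨jmax, hjmax⟩ := (DNT.cnt_pos_iff v amax).mp hposmax
    obtain ⟨amin, haminS, hmin'⟩ := Finset.exists_min_image
      (Finset.univ.filter fun x => 0 < cnt v x) (cnt v) ⟨v i0, by simp [hpos1]⟩
    have hposmin : 0 < cnt v amin := (Finset.mem_filter.mp haminS).2
    obtain ⟨jmin, hjmin⟩ := (DNT.cnt_pos_iff v amin).mp hposmin
    have hmin : ∀ x, 0 < cnt v x → cnt v amin ≤ cnt v x := fun x hx =>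
      hmin' x (by simp [hx])
    have hminmax : cnt v amin ≤ cnt v amax := hmin _ hposmax
    have hNtop : ∀ k, cnt v amax < k → DNT.Ncf v k = 0 := by
      intro k hk
      rw [DNT.Ncf, Finset.card_eq_zero, Finset.filter_eq_empty_iff]
      intro x _
      have := hmax x
      omega
    have hsecond : ∃ a2, a2 ≠ amax ∧ 0 < cnt v a2 := by
      by_cases h : v i0 = amax
      · exact ⟨v i1, fun hh => hi1 (hh.trans h.symm), hpos2⟩
      · exact ⟨v i0, h, hpos1⟩
    obtain ⟨a2, ha2max, hpos3⟩ := hsecond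
    by_cases hBB : cnt v amin = cnt v amax
    · -- B1 : all positive counts equal
      have hallp : ∀ x, cnt v x = 0 ∨ cnt v x = cnt v amax := by
        intro x
        by_cases hx : 0 < cnt v x
        · right
          have := hmin x hx
          have := hmax x
          omega
        · left; omega
      by_cases hfull : ∀ x : Fin q, 0 < cnt v x
      · -- B1a : case (v)
        right; right; right; right
        have hall : ∀ x, cnt v x = cnt v amax := by
          intro x
          rcases hallp x with h | h
          · exact absurd h (by have := hfull x; omega)
          · exact h
        have hmpq : m = cnt v amax * q := by
          have hs := DNT.sum_cnt v
          rw [Finset.sum_congr rfl (fun x _ => hall x), Finset.sum_const,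
            Finset.card_univ, Fintype.card_fin, smul_eq_mul] at hs
          exact hs.symm.trans (Nat.mul_comm q (cnt v amax))
        refine ⟨cnt v amax, hposmax, hmpq, ?_⟩
        intro β hβ
        simp only [allCode, Set.mem_setOf_eq]
        intro a
        have hNvq : DNT.Ncf v (cnt v amax) = q := by
          rw [DNT.Ncf, Finset.filter_true_of_mem (fun x _ => hall x),
            Finset.card_univ, Fintype.card_fin]
        have h1 := congrFun (hNC β hβ) (cnt v amax)
        rw [hNvq] at h1
        have huniv : (Finset.univ.filter fun x => cnt β x = cnt v amax) = Finset.univ := by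
          apply Finset.eq_univ_of_card
          rw [← DNT.Ncf, h1, Fintype.card_fin]
        have : a ∈ Finset.univ.filter fun x => cnt β x = cnt v amax := by
          rw [huniv]; exact Finset.mem_univ a
        exact (Finset.mem_filter.mp this).2
      · push_neg at hfull
        obtain ⟨b0, hb0⟩ := hfull
        have hb0z : cnt v b0 = 0 := by omega
        by_cases hp1 : cnt v amax = 1
        · -- B1b-i : injection code, case (iii)
          right; right; left
          have hall01 : ∀ x, cnt v x ≤ 1 := by
            intro x
            rcases hallp x with h | h <;> omega
          have hvInj : Function.Injective v := DNT.injective_of_cnt_le_one hall01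
          have hmq : m < q := by
            have hle : m ≤ q := by
              have := Fintype.card_le_of_injective v hvInj
              simpa using this
            rcases Nat.lt_or_ge m q with h | h
            · exact h
            · exfalso
              have hmqe : m = q := by omega
              have hbij : Function.Bijective v := by
                rw [Fintype.bijective_iff_injective_and_card]
                exact ⟨hvInj, by simp [hmqe]⟩
              obtain ⟨j, hj⟩ := hbij.2 b0
              have : 0 < cnt v b0 := (DNT.cnt_pos_iff v b0).mpr ⟨j, hj⟩
              omega
          have hne6 : v i0 ≠ v i1 := Ne.symm hi1
          have hc1 : cnt v (v i0) = 1 := by have := hall01 (v i0); omega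
          have hc2 : cnt v (v i1) = 1 := by have := hall01 (v i1); omega
          have hNv2 : DNT.Ncf v 2 = 0 := hNtop 2 (by omega)
          have e9 := DNT.Ncf_update v i1 (v i0) hne6 2
          have f9 : DNT.Ncf (Function.update v i1 (v i0)) 2 = 1 := by
            split_ifs at e9 <;> omega
          have hW2 : DNT.Ncf w 2 = 1 := by
            rcases hop v hvC i1 (v i0) hne6 with h | h
            · exfalso
              have := congrFun h 2
              omega
            · rw [← h]; exact f9
          have hNv1m : DNT.Ncf v 1 = m := by
            have hs := DNT.sum_cnt v
            rw [← Finset.sum_filter_add_sum_filter_not Finset.univ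
              (fun x => cnt v x = 1) (cnt v)] at hs
            have h1 : ∑ x ∈ (Finset.univ.filter fun x => cnt v x = 1), cnt v x
                = DNT.Ncf v 1 := by
              rw [Finset.sum_congr rfl (fun x hx => (Finset.mem_filter.mp hx).2), DNT.Ncf]
              simp
            have h2 : ∑ x ∈ (Finset.univ.filter fun x => ¬ cnt v x = 1), cnt v x = 0 := by
              apply Finset.sum_eq_zero
              intro x hx
              have hx' := (Finset.mem_filter.mp hx).2
              have := hall01 x
              omega
            omega
          have hCinj : ∀ β ∈ C, Function.Injective β := by
            intro β hβ
            apply DNT.injective_of_cnt_le_one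
            apply DNT.cnt_le_one_of_Ncf
            rw [congrFun (hNC β hβ) 1, hNv1m]
          have hclosedI : ∀ β ∈ C, ∀ γ : Fin m → Fin q, Function.Injective γ →
              hammingDist γ β = 1 → γ ∈ C := by
            intro β hβ γ hγ hd1
            rcases DNT.mem_of_dist_one hβ hd1 with h | h
            · exact h
            · exfalso
              have h2 := congrFun (hN1 γ h) 2
              have hz : DNT.Ncf γ 2 = 0 := by
                rw [DNT.Ncf, Finset.card_eq_zero, Finset.filter_eq_empty_iff]
                intro x _
                have := DNT.cnt_le_one_of_inj hγ x
                omega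
              omega
          refine ⟨hmq, ?_⟩
          ext γ
          constructor
          · intro hγ
            exact hCinj γ hγ
          · intro hγ
            exact DNT.inj_reach hmq hvC hvInj hclosedI (hammingDist γ v) γ hγ le_rfl
        · -- B1b-ii : contradiction
          exfalso
          have hp2 : 2 ≤ cnt v amax := by omega
          have hb0ne : b0 ≠ v jmax := by
            rw [hjmax]
            intro h
            rw [h] at hb0z
            omega
          have e1 := DNT.Ncf_update v jmax b0 hb0ne (cnt v amax + 1)
          rw [hjmax] at e1
          have hz1 := hNtop (cnt v amax + 1) (by omega)
          have f1 : DNT.Ncf (Function.update v jmax b0) (cnt v amax + 1) = 0 := by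
            split_ifs at e1 <;> omega
          have e2 := DNT.Ncf_update v jmax b0 hb0ne 1
          rw [hjmax] at e2
          have hzv1 : DNT.Ncf v 1 = 0 := by
            rw [DNT.Ncf, Finset.card_eq_zero, Finset.filter_eq_empty_iff]
            intro x _
            rcases hallp x with h | h <;> omega
          have f2 : 1 ≤ DNT.Ncf (Function.update v jmax b0) 1 := by
            split_ifs at e2 <;> omega
          have ha2p : cnt v a2 = cnt v amax := by
            rcases hallp a2 with h | h
            · omega
            · exact h
          have ha2ne : a2 ≠ v jmax := by rw [hjmax]; exact ha2max
          have e3 := DNT.Ncf_update v jmax a2 ha2ne (cnt v amax + 1)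
          rw [hjmax] at e3
          have f3 : DNT.Ncf (Function.update v jmax a2) (cnt v amax + 1) = 1 := by
            split_ifs at e3 <;> omega
          rcases hop v hvC jmax b0 hb0ne with h1 | h1
          · have := congrFun h1 1
            omega
          · rcases hop v hvC jmax a2 ha2ne with h2 | h2
            · have := congrFun h2 (cnt v amax + 1)
              omega
            · have ha := congrFun h1 (cnt v amax + 1)
              have hb := congrFun h2 (cnt v amax + 1)
              omega
    · -- B2 : counts not all equal
      have hlt : cnt v amin < cnt v amax := by omega
      have hamaxmin : amax ≠ amin := by
        intro h
        rw [h] at hlt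
        omega
      have hmaxne : amax ≠ v jmin := by rw [hjmin]; exact hamaxmin
      have e0 := DNT.Ncf_update v jmin amax hmaxne (cnt v amax + 1)
      rw [hjmin] at e0
      have hz0 := hNtop (cnt v amax + 1) (by omega)
      have f0 : DNT.Ncf (Function.update v jmin amax) (cnt v amax + 1) = 1 := by
        split_ifs at e0 <;> omega
      have hν2w : DNT.Ncf (Function.update v jmin amax) = DNT.Ncf w := by
        rcases hop v hvC jmin amax hmaxne with h | h
        · exfalso
          have := congrFun h (cnt v amax + 1)
          omega
        · exact h
      have hW : DNT.Ncf w (cnt v amax + 1) = 1 := by rw [← hν2w]; exact f0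
      have hu1 : 1 ≤ DNT.Ncf v (cnt v amax) := by
        rw [DNT.Ncf]
        exact Finset.card_pos.mpr ⟨amax, by simp⟩
      have hv1 : 1 ≤ DNT.Ncf v (cnt v amin) := by
        rw [DNT.Ncf]
        exact Finset.card_pos.mpr ⟨amin, by simp⟩
      by_cases hgap : cnt v amin + 1 < cnt v amax
      · -- B2a : contradiction
        exfalso
        have haminne : amin ≠ v jmax := by rw [hjmax]; exact Ne.symm hamaxmin
        have e1 := DNT.Ncf_update v jmax amin haminne (cnt v amax + 1)
        rw [hjmax] at e1
        have f1 : DNT.Ncf (Function.update v jmax amin) (cnt v amax + 1) = 0 := by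
          split_ifs at e1 <;> omega
        have e2 := DNT.Ncf_update v jmax amin haminne (cnt v amax)
        rw [hjmax] at e2
        rcases hop v hvC jmax amin haminne with h | h
        · have := congrFun h (cnt v amax)
          split_ifs at e2 <;> omega
        · have := congrFun h (cnt v amax + 1)
          omega
      · -- B2b : k1 = ks + 1
        have hk1eq : cnt v amax = cnt v amin + 1 := by omega
        have hallc : ∀ x, cnt v x = 0 ∨ cnt v x = cnt v amin ∨ cnt v x = cnt v amax := by
          intro x
          by_cases hx : 0 < cnt v x
          · have := hmin x hx
            have := hmax x
            omega
          · left; omega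
        by_cases hu2 : 2 ≤ DNT.Ncf v (cnt v amax)
        · -- B2b-1 : contradiction
          exfalso
          obtain ⟨x, hx, y, hy, hxy⟩ := Finset.one_lt_card.mp hu2
          have hex : ∃ a', a' ≠ amax ∧ cnt v a' = cnt v amax := by
            by_cases hxa : x = amax
            · refine ⟨y, ?_, (Finset.mem_filter.mp hy).2⟩
              rw [← hxa]
              exact fun h => hxy h.symm
            · exact ⟨x, hxa, (Finset.mem_filter.mp hx).2⟩
          obtain ⟨a', ha'max, ha'cnt⟩ := hex
          have ha'ne : a' ≠ v jmax := by rw [hjmax]; exact ha'max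
          have e3 := DNT.Ncf_update v jmax a' ha'ne (cnt v amax + 1)
          rw [hjmax] at e3
          have f3 : DNT.Ncf (Function.update v jmax a') (cnt v amax + 1) = 1 := by
            split_ifs at e3 <;> omega
          have e4 := DNT.Ncf_update v jmax a' ha'ne (cnt v amax)
          rw [hjmax] at e4
          have f4 : DNT.Ncf (Function.update v jmax a') (cnt v amax) + 2
              = DNT.Ncf v (cnt v amax) := by
            split_ifs at e4 <;> omega
          have e0b := DNT.Ncf_update v jmin amax hmaxne (cnt v amax)
          rw [hjmin] at e0b
          have f0b : DNT.Ncf (Function.update v jmin amax) (cnt v amax) + 1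
              = DNT.Ncf v (cnt v amax) := by
            split_ifs at e0b <;> omega
          rcases hop v hvC jmax a' ha'ne with h | h
          · have := congrFun h (cnt v amax + 1)
            omega
          · have h1 := congrFun h (cnt v amax)
            have h2 := congrFun hν2w (cnt v amax)
            omega
        · by_cases hvv2 : 2 ≤ DNT.Ncf v (cnt v amin)
          · -- B2b-2 : contradiction
            exfalso
            obtain ⟨x, hx, y, hy, hxy⟩ := Finset.one_lt_card.mp hvv2
            have hex : ∃ a'', a'' ≠ amin ∧ cnt v a'' = cnt v amin := by
              by_cases hxa : x = amin
              · refine ⟨y, ?_, (Finset.mem_filter.mp hy).2⟩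
                rw [← hxa]
                exact fun h => hxy h.symm
              · exact ⟨x, hxa, (Finset.mem_filter.mp hx).2⟩
            obtain ⟨a'', ha''min, ha''cnt⟩ := hex
            have ha''ne : a'' ≠ v jmin := by rw [hjmin]; exact ha''min
            have e5 := DNT.Ncf_update v jmin a'' ha''ne (cnt v amax + 1)
            rw [hjmin] at e5
            have f5 : DNT.Ncf (Function.update v jmin a'') (cnt v amax + 1) = 0 := by
              split_ifs at e5 <;> omega
            have e6 := DNT.Ncf_update v jmin a'' ha''ne (cnt v amax)
            rw [hjmin] at e6
            have f6 : DNT.Ncf (Function.update v jmin a'') (cnt v amax)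
                = DNT.Ncf v (cnt v amax) + 1 := by
              split_ifs at e6 <;> omega
            rcases hop v hvC jmin a'' ha''ne with h | h
            · have := congrFun h (cnt v amax)
              omega
            · have := congrFun h (cnt v amax + 1)
              omega
          · -- B2b-3 : u = vv = 1
            have hu : DNT.Ncf v (cnt v amax) = 1 := by omega
            have hvv : DNT.Ncf v (cnt v amin) = 1 := by omega
            by_cases hfull : ∀ x : Fin q, 0 < cnt v x
            · -- W case (iv)
              right; right; right; left
              have huniqmax : ∀ x, cnt v x = cnt v amax → x = amax := by
                intro x hx
                have h1 := hu
                rw [DNT.Ncf, Finset.card_eq_one] at h1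
                obtain ⟨y, hy⟩ := h1
                have hx' : x ∈ Finset.univ.filter fun z => cnt v z = cnt v amax := by
                  simp [hx]
                have ha' : amax ∈ Finset.univ.filter fun z => cnt v z = cnt v amax := by
                  simp
                rw [hy, Finset.mem_singleton] at hx' ha'
                rw [hx', ha']
              have huniqmin : ∀ x, cnt v x = cnt v amin → x = amin := by
                intro x hx
                have h1 := hvv
                rw [DNT.Ncf, Finset.card_eq_one] at h1
                obtain ⟨y, hy⟩ := h1
                have hx' : x ∈ Finset.univ.filter fun z => cnt v z = cnt v amin := by
                  simp [hx]
                have ha' : amin ∈ Finset.univ.filter fun z => cnt v z = cnt v amin := by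
                  simp
                rw [hy, Finset.mem_singleton] at hx' ha'
                rw [hx', ha']
              have hax : ∀ x : Fin q, x = amax ∨ x = amin := by
                intro x
                rcases hallc x with h0 | hks | hk1
                · exact absurd h0 (by have := hfull x; omega)
                · exact Or.inr (huniqmin x hks)
                · exact Or.inl (huniqmax x hk1)
              have hunivpair : (Finset.univ : Finset (Fin q)) = {amax, amin} := by
                apply Finset.eq_univ_iff_forall.mpr ?_ |>.symm
                intro x
                rcases hax x with h | h <;> simp [h]
              have hq2 : q = 2 := by
                have h2 : Fintype.card (Fin q) = ({amax, amin} : Finset (Fin q)).card := by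
                  rw [← Finset.card_univ, hunivpair]
                rw [Fintype.card_fin] at h2
                rw [h2, Finset.card_insert_of_notMem (by simp [hamaxmin]),
                  Finset.card_singleton]
              have hsumγ : ∀ γ : Fin m → Fin q, cnt γ amax + cnt γ amin = m := by
                intro γ
                have hs := DNT.sum_cnt γ
                rw [hunivpair, Finset.sum_pair hamaxmin] at hs
                exact hs
              have hsumv := hsumγ v
              have hclosedW : ∀ β ∈ C, ∀ γ : Fin m → Fin q,
                  (cnt γ amax = cnt v amin ∨ cnt γ amax = cnt v amin + 1) →
                  hammingDist γ β = 1 → γ ∈ C := by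
                intro β hβ γ hinv hd1
                rcases DNT.mem_of_dist_one hβ hd1 with h | h
                · exact h
                · exfalso
                  have h2 := congrFun (hN1 γ h) (cnt v amax + 1)
                  have hz : DNT.Ncf γ (cnt v amax + 1) = 0 := by
                    rw [DNT.Ncf, Finset.card_eq_zero, Finset.filter_eq_empty_iff]
                    intro x _
                    have hsγ := hsumγ γ
                    rcases hax x with hh | hh <;> rw [hh] <;> omega
                  omega
              refine ⟨hq2, by omega, Nat.odd_iff.mpr (by omega), ?_⟩
              ext γ
              constructor
              · intro hγ
                have hb := hNC γ hγ
                have h1 := congrFun hb (cnt v amax)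
                rw [hu] at h1
                have h2 := congrFun hb (cnt v amin)
                rw [hvv] at h2
                unfold DNT.Ncf at h1 h2
                obtain ⟨a, ha⟩ := Finset.card_pos.mp (by omega :
                  0 < (Finset.univ.filter fun x => cnt γ x = cnt v amax).card)
                obtain ⟨b, hb'⟩ := Finset.card_pos.mp (by omega :
                  0 < (Finset.univ.filter fun x => cnt γ x = cnt v amin).card)
                have hca := (Finset.mem_filter.mp ha).2
                have hcb := (Finset.mem_filter.mp hb').2
                refine ⟨a, b, ?_, ?_, ?_⟩
                · intro h
                  rw [h] at hca
                  omega
                · rw [show (m + 1) / 2 = cnt v amax by omega]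
                  exact hca
                · rw [show (m - 1) / 2 = cnt v amin by omega]
                  exact hcb
              · intro hγ
                obtain ⟨a, b, hab, hha, hhb⟩ := hγ
                rw [show (m + 1) / 2 = cnt v amax by omega] at hha
                rw [show (m - 1) / 2 = cnt v amin by omega] at hhb
                have hinv : cnt γ amax = cnt v amin ∨ cnt γ amax = cnt v amin + 1 := by
                  rcases hax a with ha' | ha' <;> rcases hax b with hb' | hb'
                  · exact absurd (ha'.trans hb'.symm) hab
                  · rw [ha'] at hha
                    right
                    omega
                  · rw [hb'] at hhb
                    left
                    exact hhb
                  · exact absurd (ha'.trans hb'.symm) hab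
                exact DNT.w_reach hamaxmin hax hvC hk1eq hclosedW
                  (hammingDist γ v) γ hinv le_rfl
            · -- t ≥ 1 : contradiction
              exfalso
              push_neg at hfull
              obtain ⟨b0, hb0⟩ := hfull
              have hb0z : cnt v b0 = 0 := by omega
              have hb0ne : b0 ≠ v jmax := by
                rw [hjmax]
                intro h
                rw [h] at hb0z
                omega
              have e7 := DNT.Ncf_update v jmax b0 hb0ne (cnt v amax + 1)
              rw [hjmax] at e7
              have f7 : DNT.Ncf (Function.update v jmax b0) (cnt v amax + 1) = 0 := by
                split_ifs at e7 <;> omega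
              have e8 := DNT.Ncf_update v jmax b0 hb0ne (cnt v amin)
              rw [hjmax] at e8
              have f8 : 2 ≤ DNT.Ncf (Function.update v jmax b0) (cnt v amin) := by
                split_ifs at e8 <;> omega
              rcases hop v hvC jmax b0 hb0ne with h | h
              · have := congrFun h (cnt v amin)
                omega
              · have := congrFun h (cnt v amax + 1)
                omega
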